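/- For integers i₁ ≥ i₂ ≥ 1, one has A(i₁+1)·A(i₂-1) ≥ A(i₁)·A(i₂). -/

import Mathlib

open Finset Nat

/-- `A n = ∏_{k=0}^{n-1} (3k+1)!/(n+k)!`, the ASM numbers (as rationals), with `A 0 = 1`. -/
def A (n : ℕ) : ℚ := ∏ k ∈ Finset.range n, ((3 * k + 1)! : ℚ) / ((n + k)! : ℚ)

private def F (m : ℕ) : ℚ := ∏ j ∈ Finset.range m, (j ! : ℚ)

private lemma F_ne (m : ℕ) : F m ≠ 0 :=
  Finset.prod_ne_zero_iff.2 fun j _ => Nat.cast_ne_zero.2 (Nat.factorial_ne_zero j)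

private lemma F_succ (m : ℕ) : F (m + 1) = F m * (m ! : ℚ) := Finset.prod_range_succ _ _

private lemma A_eq (n : ℕ) :
    A n = (∏ k ∈ Finset.range n, ((3 * k + 1)! : ℚ)) * F n / F (2 * n) := by
  have h1 : F n * ∏ i ∈ Finset.Ico n (2 * n), ((i)! : ℚ) = F (2 * n) :=
    Finset.prod_range_mul_prod_Ico _ (by omega)
  have h2 : (∏ i ∈ Finset.Ico n (2 * n), ((i)! : ℚ))
      = ∏ k ∈ Finset.range n, (((n + k))! : ℚ) := by
    rw [Finset.prod_Ico_eq_prod_range]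
    simp only [two_mul, Nat.add_sub_cancel_left]
  have h3 : (∏ k ∈ Finset.range n, (((n + k))! : ℚ)) ≠ 0 :=
    Finset.prod_ne_zero_iff.2 fun j _ => Nat.cast_ne_zero.2 (Nat.factorial_ne_zero _)
  unfold A
  rw [Finset.prod_div_distrib, ← h1, h2]
  field_simp [F_ne]

private def r (n : ℕ) : ℚ := ((3 * n + 1)! * n ! : ℚ) / (((2 * n)! : ℚ) * ((2 * n + 1)! : ℚ))

private lemma A_succ (n : ℕ) : A (n + 1) = A n * r n := by
  have hf : ∀ m : ℕ, ((m)! : ℚ) ≠ 0 := fun m => Nat.cast_ne_zero.2 (Nat.factorial_ne_zero m)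
  rw [A_eq, A_eq, r]
  have h : 2 * (n + 1) = (2 * n + 1) + 1 := by ring
  rw [h, F_succ, F_succ, F_succ, Finset.prod_range_succ]
  field_simp [F_ne]

private lemma A_pos (n : ℕ) : 0 < A n := by
  apply Finset.prod_pos
  intro k _
  apply _root_.div_pos <;> exact_mod_cast Nat.factorial_pos _

private lemma r_pos (n : ℕ) : 0 < r n := by
  apply _root_.div_pos
  · exact_mod_cast Nat.mul_pos (Nat.factorial_pos _) (Nat.factorial_pos _)
  · have := Nat.factorial_pos (2 * n)
    have := Nat.factorial_pos (2 * n + 1)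
    positivity

private lemma r_key (n : ℕ) :
    (3 * n + 1)! * n ! * ((2 * (n + 1))! * (2 * (n + 1) + 1)!)
      ≤ (3 * (n + 1) + 1)! * (n + 1)! * ((2 * n)! * (2 * n + 1)!) := by
  have f1 : (3 * (n + 1) + 1)! = (3 * n + 4) * ((3 * n + 3) * ((3 * n + 2) * (3 * n + 1)!)) := by
    have h : 3 * (n + 1) + 1 = ((3 * n + 1) + 1 + 1) + 1 := by ring
    rw [h, Nat.factorial_succ ((3 * n + 1) + 1 + 1), Nat.factorial_succ ((3 * n + 1) + 1),
      Nat.factorial_succ (3 * n + 1)]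
  have f2 : (2 * (n + 1))! = (2 * n + 2) * ((2 * n + 1) * (2 * n)!) := by
    have h : 2 * (n + 1) = (2 * n + 1) + 1 := by ring
    rw [h, Nat.factorial_succ (2 * n + 1), Nat.factorial_succ (2 * n)]
  have f3 : (2 * (n + 1) + 1)! = (2 * n + 3) * ((2 * n + 2) * (2 * n + 1)!) := by
    have h : 2 * (n + 1) + 1 = ((2 * n + 1) + 1) + 1 := by ring
    rw [h, Nat.factorial_succ ((2 * n + 1) + 1), Nat.factorial_succ (2 * n + 1)]
  have f4 : (n + 1)! = (n + 1) * n ! := Nat.factorial_succ n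
  rw [f1, f2, f3, f4]
  have key : (2 * n + 2) * (2 * n + 1) * ((2 * n + 3) * (2 * n + 2))
      ≤ (3 * n + 4) * ((3 * n + 3) * ((3 * n + 2) * (n + 1))) := by nlinarith [sq_nonneg n]
  calc (3 * n + 1)! * n ! * ((2 * n + 2) * ((2 * n + 1) * (2 * n)!) * ((2 * n + 3) * ((2 * n + 2) * (2 * n + 1)!)))
      = ((2 * n + 2) * (2 * n + 1) * ((2 * n + 3) * (2 * n + 2))) * ((3 * n + 1)! * n ! * ((2 * n)! * (2 * n + 1)!)) := by ring
    _ ≤ ((3 * n + 4) * ((3 * n + 3) * ((3 * n + 2) * (n + 1)))) * ((3 * n + 1)! * n ! * ((2 * n)! * (2 * n + 1)!)) :=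
        Nat.mul_le_mul_right _ key
    _ = (3 * n + 4) * ((3 * n + 3) * ((3 * n + 2) * (3 * n + 1)!)) * ((n + 1) * n !) * ((2 * n)! * (2 * n + 1)!) := by ring

private lemma r_mono : Monotone r := by
  apply monotone_nat_of_le_succ
  intro n
  unfold r
  rw [div_le_div_iff₀]
  · have := r_key n
    calc ((3 * n + 1)! * n ! : ℚ) * (((2 * (n + 1))! : ℚ) * ((2 * (n + 1) + 1)! : ℚ))
        = (((3 * n + 1)! * n ! * ((2 * (n + 1))! * (2 * (n + 1) + 1)!) : ℕ) : ℚ) := by push_cast; ring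
      _ ≤ (((3 * (n + 1) + 1)! * (n + 1)! * ((2 * n)! * (2 * n + 1)!) : ℕ) : ℚ) := by
          exact_mod_cast this
      _ = ((3 * (n + 1) + 1)! * (n + 1)! : ℚ) * (((2 * n)! : ℚ) * ((2 * n + 1)! : ℚ)) := by
          push_cast; ring
  · have h1 := Nat.factorial_pos (2 * n); have h2 := Nat.factorial_pos (2 * n + 1)
    have h1' : (0:ℚ) < (2*n)! := by exact_mod_cast h1
    have h2' : (0:ℚ) < (2*n+1)! := by exact_mod_cast h2
    positivity
  · have h1 := Nat.factorial_pos (2 * (n+1)); have h2 := Nat.factorial_pos (2 * (n+1) + 1)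
    have h1' : (0:ℚ) < (2*(n+1))! := by exact_mod_cast h1
    have h2' : (0:ℚ) < (2*(n+1)+1)! := by exact_mod_cast h2
    positivity

theorem stmt_2 (i₁ i₂ : ℕ) (h2 : 1 ≤ i₂) (h12 : i₂ ≤ i₁) :
    A (i₁ + 1) * A (i₂ - 1) ≥ A i₁ * A i₂ := by
  obtain ⟨j, rfl⟩ : ∃ j, i₂ = j + 1 := ⟨i₂ - 1, (Nat.succ_pred_eq_of_pos h2).symm⟩
  simp only [Nat.add_sub_cancel]
  rw [A_succ i₁, A_succ j]
  have hm : r j ≤ r i₁ := r_mono (by omega)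
  have h1 := A_pos i₁
  have h2 := A_pos j
  have h3 := r_pos j
  nlinarith [mul_pos h1 h2]
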